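/- (Theorem 1, part 2) For every density matrix ρ on (ℂ^d)^{⊗N} and every spectral decomposition ρ = Σ_k p_k |k⟩⟨k| into an orthonormal eigenbasis, the sum of the quantum Fisher informations over the three directions satisfies Σ_{α∈{x,y,z}} F_Q(ρ, J^α) ≤ 4 N s (N s + 1), where F_Q(ρ, J^α) = 2·Σ_{k,l : p_k + p_l > 0} ((p_k − p_l)²/(p_k + p_l))·|⟨k|J^α|l⟩|². -/

import Mathlib

open Matrix Complex

/-- The spin quantum number `s = (d-1)/2` for local dimension `d`. -/
noncomputable def sval (d : ℕ) : ℝ := ((d : ℝ) - 1) / 2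

/-- The magnetic quantum number `m = j - s` attached to the `j`-th basis vector,
so that `m` runs over `-s, -s+1, …, s`. -/
noncomputable def mval (d : ℕ) (j : Fin d) : ℝ := (j : ℝ) - sval d

/-- The spin-`s` operator `S^x`:
`⟨m'|S^x|m⟩ = (δ_{m',m+1} + δ_{m'+1,m}) (1/2) √(s(s+1) - m' m)`. -/
noncomputable def Sx (d : ℕ) : Matrix (Fin d) (Fin d) ℂ := fun j' j =>
  ((if (j' : ℕ) = (j : ℕ) + 1 then 1 else 0) + (if (j' : ℕ) + 1 = (j : ℕ) then 1 else 0)) *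
    (1 / 2) * (Real.sqrt (sval d * (sval d + 1) - mval d j' * mval d j) : ℂ)

/-- The spin-`s` operator `S^y`:
`⟨m'|S^y|m⟩ = (δ_{m',m+1} - δ_{m'+1,m}) (1/(2i)) √(s(s+1) - m' m)`. -/
noncomputable def Sy (d : ℕ) : Matrix (Fin d) (Fin d) ℂ := fun j' j =>
  ((if (j' : ℕ) = (j : ℕ) + 1 then 1 else 0) - (if (j' : ℕ) + 1 = (j : ℕ) then 1 else 0)) *
    (1 / (2 * Complex.I)) * (Real.sqrt (sval d * (sval d + 1) - mval d j' * mval d j) : ℂ)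

/-- The spin-`s` operator `S^z`: `⟨m'|S^z|m⟩ = δ_{m',m} m`. -/
noncomputable def Sz (d : ℕ) : Matrix (Fin d) (Fin d) ℂ := fun j' j =>
  if j' = j then (mval d j : ℂ) else 0

/-- The three spin-`s` matrices `S^x, S^y, S^z`, indexed by `α : Fin 3`. -/
noncomputable def spin (d : ℕ) : Fin 3 → Matrix (Fin d) (Fin d) ℂ := ![Sx d, Sy d, Sz d]

/-- The single-site operator `A_i` acting as `A` on the `i`-th tensor factor of `(ℂ^d)^{⊗N}`
and as the identity on all other factors. -/
noncomputable def siteOp (d N : ℕ) (A : Matrix (Fin d) (Fin d) ℂ) (i : Fin N) :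
    Matrix (Fin N → Fin d) (Fin N → Fin d) ℂ := fun f g =>
  A (f i) (g i) * ∏ j ∈ Finset.univ.erase i, (if f j = g j then 1 else 0)

/-- The collective spin operator `J = Σ_{i=1}^N A_i` on `(ℂ^d)^{⊗N}`. -/
noncomputable def collOp (d N : ℕ) (A : Matrix (Fin d) (Fin d) ℂ) :
    Matrix (Fin N → Fin d) (Fin N → Fin d) ℂ := ∑ i : Fin N, siteOp d N A i

/-- The quantum Fisher information of a state with spectral data `(p, v)` (eigenvalues `p k`
and orthonormal eigenvectors `v k`) with respect to a generator `G`: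
`F_Q = 2 Σ_{k,l : p_k+p_l>0} ((p_k-p_l)²/(p_k+p_l)) |⟨k|G|l⟩|²`. -/
noncomputable def qfi {ι : Type*} [Fintype ι] (p : ι → ℝ) (v : ι → (ι → ℂ))
    (G : Matrix ι ι ℂ) : ℝ :=
  2 * ∑ k : ι, ∑ l : ι,
    if 0 < p k + p l then
      ((p k - p l) ^ 2 / (p k + p l)) * ‖star (v k) ⬝ᵥ G.mulVec (v l)‖ ^ 2
    else 0

/-- raising operator -/
noncomputable def Sp (d : ℕ) : Matrix (Fin d) (Fin d) ℂ := fun j' j =>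
  if (j' : ℕ) = (j : ℕ) + 1 then (Real.sqrt (sval d * (sval d + 1) - mval d j' * mval d j) : ℂ)
  else 0

lemma Sp_conjTranspose_apply (d : ℕ) (j' j : Fin d) :
    (Sp d)ᴴ j' j = if (j' : ℕ) + 1 = (j : ℕ) then
      (Real.sqrt (sval d * (sval d + 1) - mval d j' * mval d j) : ℂ) else 0 := by
  simp only [conjTranspose_apply, Sp]
  split_ifs with h1 h2 h2
  · rw [mul_comm (mval d j')]; simp
  · omega
  · omega
  · simp

lemma Sx_decomp (d : ℕ) : Sx d = (1/2 : ℂ) • (Sp d + (Sp d)ᴴ) := by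
  ext j' j
  simp only [Sx, Matrix.smul_apply, Matrix.add_apply, Sp_conjTranspose_apply, Sp, smul_eq_mul]
  split_ifs with h1 h2 h2
  · omega
  · push_cast; ring
  · push_cast; ring
  · push_cast; ring

lemma Sy_decomp (d : ℕ) : Sy d = (Complex.I/2 : ℂ) • ((Sp d)ᴴ - Sp d) := by
  ext j' j
  have hI : (1 : ℂ) / (2 * Complex.I) = -Complex.I / 2 := by
    field_simp [Complex.I_ne_zero]
    rw [sq, Complex.I_mul_I]; ring
  simp only [Sy, Matrix.smul_apply, Matrix.sub_apply, Sp_conjTranspose_apply, Sp, smul_eq_mul, hI]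
  split_ifs with h1 h2 h2
  · omega
  · push_cast; ring
  · push_cast; ring
  · push_cast; ring

lemma Sz_eq (d : ℕ) : Sz d = Matrix.diagonal (fun j => (mval d j : ℂ)) := by
  ext j' j
  simp only [Sz, Matrix.diagonal_apply]
  split_ifs with h <;> simp_all

lemma Sz_conjTranspose (d : ℕ) : (Sz d)ᴴ = Sz d := by
  rw [Sz_eq]; ext j' j
  simp only [conjTranspose_apply, Matrix.diagonal_apply]
  split_ifs with h1 h2 h2 <;> simp_all [eq_comm]

/-- [Sz, Sp] = Sp -/
lemma comm_Sz_Sp (d : ℕ) : Sz d * Sp d - Sp d * Sz d = Sp d := by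
  rw [Sz_eq]
  ext j' j
  simp only [Matrix.sub_apply, diagonal_mul, mul_diagonal, Sp]
  split_ifs with h1
  · have : mval d j' = mval d j + 1 := by
      simp only [mval]; rw [h1]; push_cast; ring
    rw [this]; push_cast; ring
  · ring


lemma neg_sval_le_mval (d : ℕ) (j : Fin d) : -sval d ≤ mval d j := by
  have : (0:ℝ) ≤ (j:ℕ) := Nat.cast_nonneg _
  simp only [mval, sval]; linarith

lemma mval_le_sval (d : ℕ) (j : Fin d) : mval d j ≤ sval d := by
  have h : ((j:ℕ):ℝ) ≤ (d:ℝ) - 1 := by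
    have := j.isLt
    have : ((j:ℕ):ℝ) + 1 ≤ (d:ℝ) := by exact_mod_cast this
    linarith
  simp only [mval, sval]; linarith

lemma mval_succ {d : ℕ} {j k : Fin d} (h : (k:ℕ) = (j:ℕ)+1) : mval d k = mval d j + 1 := by
  simp only [mval]
  rw [h]; push_cast; ring

lemma sqrt_pair_mul {d : ℕ} {a b : Fin d} (h : (b:ℕ) = (a:ℕ)+1) :
    ((Real.sqrt (sval d * (sval d + 1) - mval d b * mval d a) : ℂ)) *
      ((Real.sqrt (sval d * (sval d + 1) - mval d a * mval d b) : ℂ))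
    = ((sval d * (sval d + 1) - mval d b * mval d a : ℝ) : ℂ) := by
  rw [mul_comm (mval d a), ← Complex.ofReal_mul, Real.mul_self_sqrt]
  have hb := mval_succ h
  have h1 := neg_sval_le_mval d a
  have h2 := mval_le_sval d b
  nlinarith [h1, h2, hb]

/-- [Sp, Spᴴ] = 2 Sz -/
lemma comm_Sp (d : ℕ) : Sp d * (Sp d)ᴴ - (Sp d)ᴴ * Sp d = (2:ℂ) • Sz d := by
  ext j' j
  simp only [Matrix.sub_apply, mul_apply, Matrix.smul_apply, Sz, smul_eq_mul]
  by_cases hjj : j' = j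
  · subst hjj
    rw [if_pos rfl]
    have hsum1 : ∑ k, Sp d j' k * (Sp d)ᴴ k j' =
        if h0 : 0 < (j' : ℕ) then
          ((sval d * (sval d + 1) - mval d j' * mval d (⟨(j':ℕ)-1, by omega⟩ : Fin d) : ℝ) : ℂ)
        else 0 := by
      split_ifs with h0
      · rw [Finset.sum_eq_single (⟨(j':ℕ)-1, by omega⟩ : Fin d)]
        · simp only [Sp, Sp_conjTranspose_apply]
          rw [if_pos (by first | omega | (simp only [Fin.val_mk] <;> omega)), if_pos (by first | omega | (simp only [Fin.val_mk] <;> omega))]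
          exact sqrt_pair_mul (by first | omega | (simp only [Fin.val_mk] <;> omega))
        · intro b _ hb
          by_cases hc : (j':ℕ) = (b:ℕ) + 1
          · exact absurd (Fin.ext (by simp only [Fin.val_mk]; omega)) hb
          · simp only [Sp]; rw [if_neg hc]; exact zero_mul _
        · intro h; exact absurd (Finset.mem_univ _) h
      · apply Finset.sum_eq_zero; intro k _
        simp only [Sp]
        rw [if_neg (by omega)]
        exact zero_mul _
    have hsum2 : ∑ k, (Sp d)ᴴ j' k * Sp d k j' =
        if h1 : (j' : ℕ) + 1 < d then
          ((sval d * (sval d + 1) - mval d (⟨(j':ℕ)+1, h1⟩ : Fin d) * mval d j' : ℝ) : ℂ)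
        else 0 := by
      split_ifs with h1
      · rw [Finset.sum_eq_single (⟨(j':ℕ)+1, h1⟩ : Fin d)]
        · simp only [Sp, Sp_conjTranspose_apply]
          rw [if_pos (by first | omega | (simp only [Fin.val_mk] <;> omega)), if_pos (by first | omega | (simp only [Fin.val_mk] <;> omega))]
          rw [mul_comm]
          exact sqrt_pair_mul (by first | omega | (simp only [Fin.val_mk] <;> omega))
        · intro b _ hb
          by_cases hc : (j':ℕ) + 1 = (b:ℕ)
          · exact absurd (Fin.ext (by simp only [Fin.val_mk]; omega)) hb
          · simp only [Sp_conjTranspose_apply]; rw [if_neg hc]; exact zero_mul _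
        · intro h; exact absurd (Finset.mem_univ _) h
      · apply Finset.sum_eq_zero; intro k _
        simp only [Sp_conjTranspose_apply]
        rw [if_neg (by omega)]
        exact zero_mul _
    rw [hsum1, hsum2]
    have hd1 : 0 < d := j'.pos
    split_ifs with h0 h1
    · -- interior
      have e1 : mval d j' = mval d (⟨(j':ℕ)-1, by omega⟩ : Fin d) + 1 :=
        mval_succ (by first | omega | (simp only [Fin.val_mk] <;> omega))
      have e2 : mval d (⟨(j':ℕ)+1, h1⟩ : Fin d) = mval d j' + 1 := mval_succ (by first | omega | (simp only [Fin.val_mk] <;> omega))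
      rw [e2]
      have e1' : mval d (⟨(j':ℕ)-1, by omega⟩ : Fin d) = mval d j' - 1 := by linarith
      rw [e1']
      push_cast; ring
    · -- top: j' = d - 1
      have hj : ((j':ℕ):ℝ) = (d:ℝ) - 1 := by
        have : (j':ℕ) = d - 1 := by omega
        rw [this]; push_cast [Nat.cast_sub hd1]; ring
      have hm : mval d j' = sval d := by simp only [mval, sval, hj]; ring
      have e1 : mval d (⟨(j':ℕ)-1, by omega⟩ : Fin d) = mval d j' - 1 := by
        have := mval_succ (d := d) (j := (⟨(j':ℕ)-1, by omega⟩ : Fin d)) (k := j') (by first | omega | (simp only [Fin.val_mk] <;> omega))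
        linarith
      rw [e1, hm]
      push_cast; ring
    · -- bottom: j' = 0
      have hj0 : (j':ℕ) = 0 := by omega
      have hm : mval d j' = -(sval d) := by simp [mval, hj0]
      have e2 : mval d (⟨(j':ℕ)+1, by omega⟩ : Fin d) = mval d j' + 1 :=
        mval_succ (by first | omega | (simp only [Fin.val_mk] <;> omega))
      rw [e2, hm]
      push_cast; ring
    · -- single site d = 1
      have h1 : mval d j' = 0 := by
        have hd' : d = 1 := by omega
        have hj0 : (j':ℕ) = 0 := by omega
        subst hd'
        simp [mval, sval, hj0]
      rw [h1]
      simp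
  · rw [if_neg hjj]
    have z1 : ∑ k, Sp d j' k * (Sp d)ᴴ k j = 0 := by
      apply Finset.sum_eq_zero; intro k _
      simp only [Sp, Sp_conjTranspose_apply]
      split_ifs with ha hb
      · exact absurd (Fin.ext (by omega)) hjj
      · exact mul_zero _
      · exact zero_mul _
      · exact zero_mul _
    have z2 : ∑ k, (Sp d)ᴴ j' k * Sp d k j = 0 := by
      apply Finset.sum_eq_zero; intro k _
      simp only [Sp, Sp_conjTranspose_apply]
      split_ifs with ha hb
      · exact absurd (Fin.ext (by omega)) hjj
      · exact mul_zero _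
      · exact zero_mul _
      · exact zero_mul _
    rw [z1, z2]; ring


lemma delta_prod_split {d N : ℕ} (i : Fin N) (f h g : Fin N → Fin d) :
    (∏ j ∈ Finset.univ.erase i, (if f j = h j then (1:ℂ) else 0)) *
      (∏ j ∈ Finset.univ.erase i, (if h j = g j then (1:ℂ) else 0)) =
    (∏ j ∈ Finset.univ.erase i, (if f j = h j then (1:ℂ) else 0)) *
      (∏ j ∈ Finset.univ.erase i, (if f j = g j then (1:ℂ) else 0)) := by
  rw [← Finset.prod_mul_distrib, ← Finset.prod_mul_distrib]
  apply Finset.prod_congr rfl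
  intro j _
  by_cases hfh : f j = h j
  · rw [hfh]
  · rw [if_neg hfh, zero_mul, zero_mul]

/-- summing a function of `h i` over all `h` agreeing with `f` off `i` -/
lemma sum_update {d N : ℕ} (i : Fin N) (f : Fin N → Fin d) (G : Fin d → ℂ) :
    ∑ h : Fin N → Fin d,
        G (h i) * ∏ j ∈ Finset.univ.erase i, (if f j = h j then (1:ℂ) else 0) =
      ∑ x : Fin d, G x := by
  have key : ∀ h : Fin N → Fin d,
      G (h i) * ∏ j ∈ Finset.univ.erase i, (if f j = h j then (1:ℂ) else 0) =
      if ∀ j ∈ Finset.univ.erase i, f j = h j then G (h i) else 0 := by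
    intro h
    rw [Finset.prod_boole]
    split_ifs <;> simp
  simp_rw [key]
  rw [← Finset.sum_filter]
  apply Finset.sum_nbij' (fun h => h i) (fun x => Function.update f i x)
  · intro a _; exact Finset.mem_univ _
  · intro x _
    simp only [Finset.mem_filter, Finset.mem_univ, true_and, Finset.mem_erase]
    intro j hj
    exact (Function.update_of_ne hj.1 x f).symm
  · intro h hh
    simp only [Finset.mem_filter, Finset.mem_univ, true_and, Finset.mem_erase] at hh
    funext j
    by_cases hji : j = i
    · subst hji; simp
    · rw [Function.update_of_ne hji]
      exact hh j ⟨hji, trivial⟩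
  · intro x _; simp
  · intro h hh
    simp only [Function.update_self]

lemma siteOp_mul_same {d N : ℕ} (A B : Matrix (Fin d) (Fin d) ℂ) (i : Fin N) :
    siteOp d N A i * siteOp d N B i = siteOp d N (A * B) i := by
  ext f g
  simp only [Matrix.mul_apply, siteOp]
  calc ∑ h : Fin N → Fin d,
        (A (f i) (h i) * ∏ j ∈ Finset.univ.erase i, (if f j = h j then (1:ℂ) else 0)) *
          (B (h i) (g i) * ∏ j ∈ Finset.univ.erase i, (if h j = g j then (1:ℂ) else 0))
      = ∑ h : Fin N → Fin d,
        (A (f i) (h i) * B (h i) (g i) *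
            ∏ j ∈ Finset.univ.erase i, (if f j = g j then (1:ℂ) else 0)) *
          ∏ j ∈ Finset.univ.erase i, (if f j = h j then (1:ℂ) else 0) := by
        apply Finset.sum_congr rfl; intro h _
        rw [mul_mul_mul_comm, delta_prod_split]; ring
    _ = (∑ x : Fin d, A (f i) x * B x (g i) *
          ∏ j ∈ Finset.univ.erase i, (if f j = g j then (1:ℂ) else 0)) :=
        sum_update i f (fun x => A (f i) x * B x (g i) *
          ∏ j ∈ Finset.univ.erase i, (if f j = g j then (1:ℂ) else 0))
    _ = (∑ x : Fin d, A (f i) x * B x (g i)) *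
          ∏ j ∈ Finset.univ.erase i, (if f j = g j then (1:ℂ) else 0) :=
        (Finset.sum_mul _ _ _).symm

lemma siteOp_mul_ne {d N : ℕ} (A B : Matrix (Fin d) (Fin d) ℂ) {i j : Fin N} (hij : i ≠ j) :
    siteOp d N A i * siteOp d N B j = fun f g =>
      A (f i) (g i) * B (f j) (g j) *
        ∏ k ∈ (Finset.univ.erase i).erase j, (if f k = g k then (1:ℂ) else 0) := by
  ext f g
  simp only [Matrix.mul_apply, siteOp]
  rw [Finset.sum_eq_single (Function.update f i (g i))]
  · have h1 : ∏ k ∈ Finset.univ.erase i, (if f k = Function.update f i (g i) k then (1:ℂ) else 0) = 1 := by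
      apply Finset.prod_eq_one; intro k hk
      rw [Function.update_of_ne (Finset.mem_erase.mp hk).1]
      simp
    have h2 : ∏ k ∈ Finset.univ.erase j, (if Function.update f i (g i) k = g k then (1:ℂ) else 0)
        = ∏ k ∈ (Finset.univ.erase j).erase i, (if f k = g k then (1:ℂ) else 0) := by
      rw [← Finset.mul_prod_erase (Finset.univ.erase j) _
        (Finset.mem_erase.mpr ⟨hij, Finset.mem_univ i⟩)]
      rw [Function.update_self]
      rw [if_pos rfl, one_mul]
      apply Finset.prod_congr rfl
      intro k hk
      rw [Function.update_of_ne (Finset.mem_erase.mp hk).1]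
    rw [h1, Function.update_self, Function.update_of_ne (Ne.symm hij), h2,
      Finset.erase_right_comm]
    ring
  · intro h _ hh
    by_cases hcase : ∀ k, k ≠ i → h k = f k
    · have hi : h i ≠ g i := by
        intro hig
        apply hh; funext k
        by_cases hki : k = i
        · subst hki; rw [Function.update_self, hig]
        · rw [Function.update_of_ne hki]; exact hcase k hki
      have : (if Function.update f i (g i) i = g i then (1:ℂ) else 0) = 1 := by simp
      have hterm : (if h i = g i then (1:ℂ) else 0) = 0 := if_neg hi
      -- the k = i factor in the second product vanishes
      rw [← Finset.mul_prod_erase (Finset.univ.erase j) _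
        (Finset.mem_erase.mpr ⟨hij, Finset.mem_univ i⟩), hterm, zero_mul, mul_zero, mul_zero]
    · push_neg at hcase
      obtain ⟨k, hki, hk⟩ := hcase
      have : ∏ k' ∈ Finset.univ.erase i, (if f k' = h k' then (1:ℂ) else 0) = 0 := by
        apply Finset.prod_eq_zero (Finset.mem_erase.mpr ⟨hki, Finset.mem_univ k⟩)
        rw [if_neg (fun hc => hk hc.symm)]
      rw [this, mul_zero, zero_mul]
  · intro hmem; exact absurd (Finset.mem_univ _) hmem

lemma siteOp_mul_comm {d N : ℕ} (A B : Matrix (Fin d) (Fin d) ℂ) {i j : Fin N} (hij : i ≠ j) :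
    siteOp d N A i * siteOp d N B j = siteOp d N B j * siteOp d N A i := by
  rw [siteOp_mul_ne A B hij, siteOp_mul_ne B A (Ne.symm hij)]
  funext f g
  rw [Finset.erase_right_comm]
  ring

lemma siteOp_sub {d N : ℕ} (A B : Matrix (Fin d) (Fin d) ℂ) (i : Fin N) :
    siteOp d N (A - B) i = siteOp d N A i - siteOp d N B i := by
  ext f g; simp only [siteOp, Matrix.sub_apply]; ring

lemma siteOp_smul {d N : ℕ} (c : ℂ) (A : Matrix (Fin d) (Fin d) ℂ) (i : Fin N) :
    siteOp d N (c • A) i = c • siteOp d N A i := by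
  ext f g; simp only [siteOp, Matrix.smul_apply, smul_eq_mul]; ring

lemma siteOp_add {d N : ℕ} (A B : Matrix (Fin d) (Fin d) ℂ) (i : Fin N) :
    siteOp d N (A + B) i = siteOp d N A i + siteOp d N B i := by
  ext f g; simp only [siteOp, Matrix.add_apply]; ring

lemma siteOp_conjTranspose {d N : ℕ} (A : Matrix (Fin d) (Fin d) ℂ) (i : Fin N) :
    (siteOp d N A i)ᴴ = siteOp d N Aᴴ i := by
  ext f g
  simp only [conjTranspose_apply, siteOp, star_mul', star_prod]
  congr 1
  apply Finset.prod_congr rfl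
  intro k _
  split_ifs with h1 h2 h2 <;> simp_all [eq_comm]

lemma collOp_conjTranspose {d N : ℕ} (A : Matrix (Fin d) (Fin d) ℂ) :
    (collOp d N A)ᴴ = collOp d N Aᴴ := by
  simp only [collOp, conjTranspose_sum]
  exact Finset.sum_congr rfl fun i _ => siteOp_conjTranspose A i

lemma collOp_smul {d N : ℕ} (c : ℂ) (A : Matrix (Fin d) (Fin d) ℂ) :
    collOp d N (c • A) = c • collOp d N A := by
  simp only [collOp, siteOp_smul, Finset.smul_sum]

lemma collOp_add {d N : ℕ} (A B : Matrix (Fin d) (Fin d) ℂ) :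
    collOp d N (A + B) = collOp d N A + collOp d N B := by
  simp only [collOp, siteOp_add, Finset.sum_add_distrib]

lemma collOp_sub {d N : ℕ} (A B : Matrix (Fin d) (Fin d) ℂ) :
    collOp d N (A - B) = collOp d N A - collOp d N B := by
  simp only [collOp, siteOp_sub, Finset.sum_sub_distrib]

/-- commutator of collective operators -/
lemma collOp_comm_sub {d N : ℕ} (A B : Matrix (Fin d) (Fin d) ℂ) :
    collOp d N A * collOp d N B - collOp d N B * collOp d N A =
      collOp d N (A * B - B * A) := by
  calc collOp d N A * collOp d N B - collOp d N B * collOp d N A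
      = ∑ i : Fin N, ∑ j : Fin N,
          (siteOp d N A i * siteOp d N B j - siteOp d N B j * siteOp d N A i) := by
        simp only [collOp, Finset.sum_mul_sum]
        rw [Finset.sum_comm (f := fun i j => siteOp d N B i * siteOp d N A j)]
        simp only [← Finset.sum_sub_distrib]
    _ = ∑ i : Fin N, siteOp d N (A * B - B * A) i := by
        apply Finset.sum_congr rfl; intro i _
        rw [Finset.sum_eq_single i]
        · rw [siteOp_mul_same, siteOp_mul_same, ← siteOp_sub]
        · intro j _ hji
          rw [siteOp_mul_comm A B (Ne.symm hji)]
          exact sub_self _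
        · intro h; exact absurd (Finset.mem_univ _) h
    _ = collOp d N (A * B - B * A) := rfl


/-- total magnetization of a configuration -/
noncomputable def muf (d N : ℕ) (f : Fin N → Fin d) : ℝ := ∑ i, mval d (f i)

lemma Jz_diagonal (d N : ℕ) :
    collOp d N (Sz d) = Matrix.diagonal (fun f => (muf d N f : ℂ)) := by
  ext f g
  simp only [collOp, Matrix.sum_apply, siteOp, Matrix.diagonal_apply]
  by_cases hfg : f = g
  · subst hfg
    rw [if_pos rfl]
    have : ∀ i : Fin N, Sz d (f i) (f i) *
        (∏ j ∈ Finset.univ.erase i, if f j = f j then (1:ℂ) else 0) = ((mval d (f i) : ℝ) : ℂ) := by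
      intro i
      rw [Finset.prod_congr rfl (fun j _ => if_pos rfl), Finset.prod_const_one, mul_one]
      simp [Sz]
    rw [Finset.sum_congr rfl (fun i _ => this i)]
    rw [muf]
    push_cast
    rfl
  · rw [if_neg hfg]
    apply Finset.sum_eq_zero
    intro i _
    obtain ⟨j₀, hj₀⟩ : ∃ j₀, f j₀ ≠ g j₀ := by
      by_contra hc; push_neg at hc; exact hfg (funext hc)
    by_cases hij : j₀ = i
    · subst hij
      have : Sz d (f j₀) (g j₀) = 0 := if_neg hj₀
      rw [this, zero_mul]
    · rw [Finset.prod_eq_zero (Finset.mem_erase.mpr ⟨hij, Finset.mem_univ _⟩) ((if_neg hj₀) : (if f j₀ = g j₀ then (1:ℂ) else 0) = 0),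
        mul_zero]

/-- total degree of a configuration -/
def degf (d N : ℕ) (f : Fin N → Fin d) : ℕ := ∑ i, (f i : ℕ)

lemma Jp_raise (d N : ℕ) (f g : Fin N → Fin d) (h : degf d N f ≠ degf d N g + 1) :
    collOp d N (Sp d) f g = 0 := by
  simp only [collOp, Matrix.sum_apply, siteOp]
  apply Finset.sum_eq_zero
  intro i _
  by_cases hsp : (f i : ℕ) = (g i : ℕ) + 1
  · by_cases hoff : ∀ j, j ≠ i → f j = g j
    · exfalso
      apply h
      unfold degf
      rw [← Finset.add_sum_erase _ _ (Finset.mem_univ i),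
        ← Finset.add_sum_erase _ (fun j => (g j : ℕ)) (Finset.mem_univ i)]
      rw [Finset.sum_congr rfl (fun j hj => by
        rw [hoff j (Finset.mem_erase.mp hj).1])]
      omega
    · push_neg at hoff
      obtain ⟨j₀, hj₀i, hj₀⟩ := hoff
      rw [Finset.prod_eq_zero (Finset.mem_erase.mpr ⟨hj₀i, Finset.mem_univ _⟩) ((if_neg hj₀) : (if f j₀ = g j₀ then (1:ℂ) else 0) = 0),
        mul_zero]
  · have : Sp d (f i) (g i) = 0 := if_neg hsp
    rw [this, zero_mul]

lemma Jp_pow_raise (d N : ℕ) (n : ℕ) (f g : Fin N → Fin d)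
    (h : degf d N f ≠ degf d N g + n) :
    ((collOp d N (Sp d)) ^ n) f g = 0 := by
  induction n generalizing f g with
  | zero =>
    have hfg : f ≠ g := by intro he; subst he; omega
    simp [Matrix.one_apply, hfg]
  | succ n ih =>
    rw [pow_succ, Matrix.mul_apply]
    apply Finset.sum_eq_zero
    intro k _
    by_cases h1 : degf d N f = degf d N k + n
    · have h2 : degf d N k ≠ degf d N g + 1 := by omega
      rw [Jp_raise d N k g h2, mul_zero]
    · rw [ih f k h1, zero_mul]

lemma degf_le (d N : ℕ) (f : Fin N → Fin d) : degf d N f ≤ N * (d - 1) := by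
  unfold degf
  calc ∑ i, (f i : ℕ) ≤ ∑ _i : Fin N, (d - 1) :=
        Finset.sum_le_sum (fun i _ => by have := (f i).isLt; omega)
    _ = N * (d - 1) := by rw [Finset.sum_const, Finset.card_univ, Fintype.card_fin, smul_eq_mul]

lemma Jp_nilpotent (d N : ℕ) : (collOp d N (Sp d)) ^ (N * (d-1) + 1) = 0 := by
  ext f g
  rw [Jp_pow_raise]
  · rfl
  · have h1 := degf_le d N f
    omega

lemma muf_le (d N : ℕ) (f : Fin N → Fin d) : |muf d N f| ≤ N * sval d := by
  rw [abs_le]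
  constructor
  · calc -(N * sval d) = ∑ _i : Fin N, (-(sval d)) := by
          rw [Finset.sum_const, Finset.card_univ, Fintype.card_fin, nsmul_eq_mul]; ring
      _ ≤ muf d N f := Finset.sum_le_sum (fun i _ => neg_sval_le_mval d (f i))
  · calc muf d N f ≤ ∑ _i : Fin N, sval d := Finset.sum_le_sum (fun i _ => mval_le_sval d (f i))
      _ = N * sval d := by rw [Finset.sum_const, Finset.card_univ, Fintype.card_fin, nsmul_eq_mul]


section ops
variable (d N : ℕ)

local notation "a" => collOp d N (Sp d)
local notation "z" => collOp d N (Sz d)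

noncomputable def bigA (d N : ℕ) : Matrix (Fin N → Fin d) (Fin N → Fin d) ℂ :=
  collOp d N (Sx d) ^ 2 + collOp d N (Sy d) ^ 2 + collOp d N (Sz d) ^ 2

lemma comm_z_a : z * a = a * z + a := by
  have h := collOp_comm_sub (d := d) (N := N) (Sz d) (Sp d)
  rw [comm_Sz_Sp] at h
  linear_combination (norm := noncomm_ring) h

lemma comm_a_ah : a * (collOp d N (Sp d))ᴴ = (collOp d N (Sp d))ᴴ * a + (z + z) := by
  have h := collOp_comm_sub (d := d) (N := N) (Sp d) (Sp d)ᴴ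
  rw [← collOp_conjTranspose] at h
  rw [comm_Sp, collOp_smul] at h
  have h2 : (2:ℂ) • collOp d N (Sz d) = z + z := two_smul ℂ _
  rw [h2] at h
  linear_combination (norm := noncomm_ring) h

lemma Jx_decomp : collOp d N (Sx d) = (1/2 : ℂ) • (a + (collOp d N (Sp d))ᴴ) := by
  rw [Sx_decomp, collOp_smul, collOp_add, collOp_conjTranspose]

lemma Jy_decomp : collOp d N (Sy d) = (Complex.I/2 : ℂ) • ((collOp d N (Sp d))ᴴ - a) := by
  rw [Sy_decomp, collOp_smul, collOp_sub, collOp_conjTranspose]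

/-- the key identity `A = J₋J₊ + J_z + J_z²` -/
lemma bigA_eq : bigA d N = (collOp d N (Sp d))ᴴ * a + z + z ^ 2 := by
  rw [bigA, Jx_decomp, Jy_decomp]
  rw [pow_two, pow_two, smul_mul_smul_comm, smul_mul_smul_comm]
  have hI : (Complex.I/2) * (Complex.I/2) = -(1/4 : ℂ) := by
    rw [div_mul_div_comm, Complex.I_mul_I]; norm_num
  have h2 : (1/2 : ℂ) * (1/2) = (1/4 : ℂ) := by norm_num
  rw [hI, h2]
  have hab := comm_a_ah d N
  set b := (collOp d N (Sp d))ᴴ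
  have expand1 : (a + b) * (a + b) = a*a + (b*a + (z+z)) + (b*a + b*b) := by
    rw [← hab]; noncomm_ring
  have expand2 : (b - a) * (b - a) = b*b - (b*a + (z+z)) - b*a + a*a := by
    rw [← hab]; noncomm_ring
  rw [expand1, expand2, pow_two]
  module

lemma comm_bigA_a : bigA d N * a = a * bigA d N := by
  have hza := comm_z_a d N
  have hab := comm_a_ah d N
  rw [bigA_eq]
  set b := (collOp d N (Sp d))ᴴ
  have h1 : (b * a + z + z^2) * a = b * (a * a) + (a * z + a) + z * (z * a) := by
    rw [← hza]; noncomm_ring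
  have h2 : z * (z * a) = (a * z + a) * z + (a * z + a) := by
    calc z * (z * a) = z * (a * z + a) := by rw [hza]
      _ = (z * a) * z + z * a := by noncomm_ring
      _ = (a * z + a) * z + (a * z + a) := by rw [hza]
  have h3 : a * (b * a + z + z^2) =
      b * (a * a) + (z + z) * a + (a * z + a * (z * z)) := by
    calc a * (b * a + z + z^2) = (a * b) * a + (a * z + a * (z * z)) := by noncomm_ring
      _ = (b * a + (z + z)) * a + (a * z + a * (z * z)) := by rw [hab]
      _ = b * (a * a) + (z + z) * a + (a * z + a * (z * z)) := by noncomm_ring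
  have h4 : (z + z) * a = (a * z + a) + (a * z + a) := by
    calc (z + z) * a = z * a + z * a := by noncomm_ring
      _ = (a * z + a) + (a * z + a) := by rw [hza]
  rw [h1, h2, h3, h4]
  noncomm_ring

lemma Jx_herm : (collOp d N (Sx d))ᴴ = collOp d N (Sx d) := by
  rw [collOp_conjTranspose]
  congr 1
  rw [Sx_decomp]
  rw [conjTranspose_smul, conjTranspose_add, conjTranspose_conjTranspose]
  rw [show (star (1/2 : ℂ)) = 1/2 by
    simp [Complex.star_def, Complex.ext_iff]]
  rw [add_comm]

lemma Jy_herm : (collOp d N (Sy d))ᴴ = collOp d N (Sy d) := by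
  rw [collOp_conjTranspose]
  congr 1
  rw [Sy_decomp]
  rw [conjTranspose_smul, conjTranspose_sub, conjTranspose_conjTranspose]
  rw [show (star (Complex.I/2 : ℂ)) = -(Complex.I/2) by
    simp [Complex.star_def, Complex.ext_iff]; norm_num]
  rw [neg_smul, ← smul_neg, neg_sub]

lemma Jz_herm : (collOp d N (Sz d))ᴴ = collOp d N (Sz d) := by
  rw [collOp_conjTranspose, Sz_conjTranspose]

lemma bigA_isHermitian : (bigA d N).IsHermitian := by
  have hx : (collOp d N (Sx d)).IsHermitian := Jx_herm d N
  have hy : (collOp d N (Sy d)).IsHermitian := Jy_herm d N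
  have hz : (collOp d N (Sz d)).IsHermitian := Jz_herm d N
  rw [bigA]
  exact ((hx.pow 2).add (hy.pow 2)).add (hz.pow 2)

/-- any eigenvalue of `bigA` is at most `Ns(Ns+1)` -/
lemma bigA_eig_le (lam : ℝ) (ψ : (Fin N → Fin d) → ℂ) (hψ : ψ ≠ 0)
    (heig : bigA d N *ᵥ ψ = (lam : ℂ) • ψ) :
    lam ≤ (N * sval d) * (N * sval d + 1) := by
  classical
  have hex : ∃ n, (collOp d N (Sp d)) ^ n *ᵥ ψ = 0 :=
    ⟨N * (d-1) + 1, by rw [Jp_nilpotent]; exact Matrix.zero_mulVec ψ⟩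
  set n₀ := Nat.find hex with hn₀
  have hn₀pos : 0 < n₀ := by
    rcases Nat.eq_zero_or_pos n₀ with h | h
    · exfalso
      have := Nat.find_spec hex
      rw [← hn₀, h] at this
      simp only [pow_zero, Matrix.one_mulVec] at this
      exact hψ this
    · exact h
  set φ := (collOp d N (Sp d)) ^ (n₀ - 1) *ᵥ ψ with hφdef
  have hφ : φ ≠ 0 := Nat.find_min hex (by omega)
  have haφ : a *ᵥ φ = 0 := by
    rw [hφdef, Matrix.mulVec_mulVec, ← pow_succ']
    have : n₀ - 1 + 1 = n₀ := by omega
    rw [this]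
    exact Nat.find_spec hex
  have hAφ : bigA d N *ᵥ φ = (lam : ℂ) • φ := by
    rw [hφdef, Matrix.mulVec_mulVec]
    have hcomm : Commute (bigA d N) (collOp d N (Sp d)) := comm_bigA_a d N
    rw [(hcomm.pow_right (n₀ - 1)).eq, ← Matrix.mulVec_mulVec, heig, Matrix.mulVec_smul]
  -- inner product computation
  have key : (lam : ℂ) * ∑ f, (Complex.normSq (φ f) : ℂ) =
      ∑ f, ((muf d N f ^ 2 + muf d N f : ℝ) : ℂ) * (Complex.normSq (φ f) : ℂ) := by
    have h1 : star φ ⬝ᵥ (bigA d N *ᵥ φ) = (lam : ℂ) * (star φ ⬝ᵥ φ) := by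
      rw [hAφ, dotProduct_smul, smul_eq_mul]
    have h2 : star φ ⬝ᵥ (bigA d N *ᵥ φ) =
        ∑ f, ((muf d N f ^ 2 + muf d N f : ℝ) : ℂ) * (Complex.normSq (φ f) : ℂ) := by
      have hz0 : ((collOp d N (Sp d))ᴴ * a) *ᵥ φ = 0 := by
        rw [← Matrix.mulVec_mulVec, haφ, Matrix.mulVec_zero]
      rw [bigA_eq, Matrix.add_mulVec, Matrix.add_mulVec, hz0, zero_add, dotProduct_add,
        Jz_diagonal, pow_two, Matrix.diagonal_mul_diagonal]
      simp only [dotProduct, Matrix.mulVec_diagonal, Pi.star_apply]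
      rw [← Finset.sum_add_distrib]
      apply Finset.sum_congr rfl
      intro f _
      have hns : (starRingEnd ℂ) (φ f) * φ f = ((Complex.normSq (φ f) : ℝ) : ℂ) :=
        Complex.normSq_eq_conj_mul_self.symm
      rw [← hns]
      simp only [Complex.star_def]
      push_cast
      ring
    rw [h1] at h2
    rw [← h2]
    congr 1
    simp only [dotProduct, Pi.star_apply, Complex.star_def]
    apply Finset.sum_congr rfl
    intro f _
    rw [← Complex.normSq_eq_conj_mul_self]
  -- pass to ℝ
  have keyR : lam * ∑ f, Complex.normSq (φ f) =
      ∑ f, (muf d N f ^ 2 + muf d N f) * Complex.normSq (φ f) := by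
    have := key
    push_cast at this
    exact_mod_cast this
  have hSpos : 0 < ∑ f, Complex.normSq (φ f) := by
    obtain ⟨f₀, hf₀⟩ : ∃ f₀, φ f₀ ≠ 0 := by
      by_contra hc; push_neg at hc; exact hφ (funext hc)
    apply Finset.sum_pos' (fun f _ => Complex.normSq_nonneg _)
    exact ⟨f₀, Finset.mem_univ _, Complex.normSq_pos.mpr hf₀⟩
  have hbound : ∑ f, (muf d N f ^ 2 + muf d N f) * Complex.normSq (φ f) ≤
      ((N * sval d) * (N * sval d + 1)) * ∑ f, Complex.normSq (φ f) := by
    rw [Finset.mul_sum]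
    apply Finset.sum_le_sum
    intro f _
    apply mul_le_mul_of_nonneg_right _ (Complex.normSq_nonneg _)
    have h := muf_le d N f
    rw [abs_le] at h
    nlinarith [h.1, h.2]
  nlinarith [keyR, hSpos, hbound]

end ops


/-- Rayleigh bound: if all eigenvalues of a Hermitian matrix are at most `C`, then
`re ⟨x, A x⟩ ≤ C * re ⟨x, x⟩`. -/
lemma rayleigh_le {n : Type*} [Fintype n] [DecidableEq n] {A : Matrix n n ℂ}
    (hA : A.IsHermitian) (C : ℝ) (hC : ∀ i, hA.eigenvalues i ≤ C) (x : n → ℂ) :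
    (star x ⬝ᵥ A *ᵥ x).re ≤ C * (star x ⬝ᵥ x).re := by
  classical
  set V : Matrix n n ℂ := (hA.eigenvectorUnitary : Matrix n n ℂ) with hV
  have hspec := hA.spectral_theorem
  set y : n → ℂ := Vᴴ *ᵥ x with hy
  have hstar : star y = star x ᵥ* V := by
    rw [hy, Matrix.star_mulVec, conjTranspose_conjTranspose]
  have hAx : A *ᵥ x = V *ᵥ ((Matrix.diagonal (RCLike.ofReal ∘ hA.eigenvalues)) *ᵥ y) := by
    conv_lhs => rw [hspec, Unitary.conjStarAlgAut_apply]
    rw [← Matrix.mulVec_mulVec, ← Matrix.mulVec_mulVec]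
    rfl
  have hyx : star x ⬝ᵥ A *ᵥ x = star y ⬝ᵥ (Matrix.diagonal (RCLike.ofReal ∘ hA.eigenvalues)) *ᵥ y := by
    rw [hAx, Matrix.dotProduct_mulVec (star x) V, ← hstar]
  have hunit : V * Vᴴ = 1 := by
    have h := (Unitary.mem_iff.mp hA.eigenvectorUnitary.2).2
    simpa [hV, Matrix.star_eq_conjTranspose] using h
  have hnorm : star y ⬝ᵥ y = star x ⬝ᵥ x := by
    rw [hstar, hy, Matrix.dotProduct_mulVec, Matrix.vecMul_vecMul, hunit, Matrix.vecMul_one]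
  have hdiag : star y ⬝ᵥ (Matrix.diagonal (RCLike.ofReal ∘ hA.eigenvalues)) *ᵥ y
      = ∑ i, ((hA.eigenvalues i * Complex.normSq (y i) : ℝ) : ℂ) := by
    simp only [dotProduct, Matrix.mulVec_diagonal, Pi.star_apply, Complex.star_def,
      Function.comp_apply, show ∀ r : ℝ, (RCLike.ofReal r : ℂ) = Complex.ofReal r from fun _ => rfl]
    apply Finset.sum_congr rfl
    intro i _
    rw [show (starRingEnd ℂ) (y i) * ((hA.eigenvalues i : ℂ) * y i)
        = (hA.eigenvalues i : ℂ) * ((starRingEnd ℂ) (y i) * y i) by ring,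
      ← Complex.normSq_eq_conj_mul_self]
    push_cast
    ring
  have hxx : (star x ⬝ᵥ x).re = ∑ i, Complex.normSq (y i) := by
    rw [← hnorm]
    simp only [dotProduct, Pi.star_apply, Complex.star_def]
    rw [Complex.re_sum]
    apply Finset.sum_congr rfl
    intro i _
    rw [← Complex.normSq_eq_conj_mul_self]
    rfl
  rw [hyx, hdiag, hxx, Complex.re_sum]
  have : ∀ i ∈ Finset.univ, ((hA.eigenvalues i * Complex.normSq (y i) : ℝ) : ℂ).re
      ≤ C * Complex.normSq (y i) := by
    intro i _
    rw [Complex.ofReal_re]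
    exact mul_le_mul_of_nonneg_right (hC i) (Complex.normSq_nonneg _)
  calc ∑ i, ((hA.eigenvalues i * Complex.normSq (y i) : ℝ) : ℂ).re
      ≤ ∑ i, C * Complex.normSq (y i) := Finset.sum_le_sum this
    _ = C * ∑ i, Complex.normSq (y i) := by rw [Finset.mul_sum]


lemma bigA_rayleigh (d N : ℕ) (x : (Fin N → Fin d) → ℂ) :
    (star x ⬝ᵥ bigA d N *ᵥ x).re ≤
      ((N * sval d) * (N * sval d + 1)) * (star x ⬝ᵥ x).re := by
  classical
  apply rayleigh_le (bigA_isHermitian d N)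
  intro i
  set hA := bigA_isHermitian d N
  set ψ : (Fin N → Fin d) → ℂ := (WithLp.equiv 2 _) (hA.eigenvectorBasis i) with hψdef
  have hne : ψ ≠ 0 := by
    intro h0
    have : hA.eigenvectorBasis i = 0 := by
      apply (WithLp.equiv 2 _).injective
      simpa [hψdef] using h0
    exact hA.eigenvectorBasis.toBasis.ne_zero i (by simpa using this)
  apply bigA_eig_le d N _ ψ hne
  have h := hA.mulVec_eigenvectorBasis i
  rw [hψdef, WithLp.equiv_apply, h]
  funext j
  simp only [Pi.smul_apply, Complex.real_smul, smul_eq_mul]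



open scoped ComplexOrder in
/-- (Theorem 1, part 2) For every density matrix `ρ` on `(ℂ^d)^{⊗N}` with spectral
decomposition `ρ = Σ_k p_k |k⟩⟨k|` into an orthonormal eigenbasis, the sum of the quantum
Fisher informations over the three directions satisfies
`Σ_α F_Q(ρ, J^α) ≤ 4Ns(Ns+1)`. -/
theorem qfi_collective_spin_sum_le (d N : ℕ) (hd : 2 ≤ d) (hN : 1 ≤ N)
    (ρ : Matrix (Fin N → Fin d) (Fin N → Fin d) ℂ)
    (hρ : ρ.PosSemidef) (htr : ρ.trace = 1)
    (p : (Fin N → Fin d) → ℝ) (v : (Fin N → Fin d) → ((Fin N → Fin d) → ℂ))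
    (hp : ∀ k, 0 ≤ p k)
    (hortho : ∀ k l, star (v k) ⬝ᵥ v l = if k = l then 1 else 0)
    (hdecomp : ρ = ∑ k, (p k : ℂ) • Matrix.vecMulVec (v k) (star (v k))) :
    (∑ α : Fin 3, qfi p v (collOp d N (spin d α)))
      ≤ 4 * (N : ℝ) * sval d * ((N : ℝ) * sval d + 1) := by
  classical
  set C : ℝ := (N * sval d) * (N * sval d + 1) with hC
  -- each collective spin matrix is Hermitian
  have hGh : ∀ α : Fin 3, (collOp d N (spin d α))ᴴ = collOp d N (spin d α) := by
    intro α
    fin_cases α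
    · simpa [spin] using Jx_herm d N
    · simpa [spin] using Jy_herm d N
    · simpa [spin] using Jz_herm d N
  -- sum of eigenvalues is 1
  have hvv : ∀ k, star (v k) ⬝ᵥ v k = 1 := by
    intro k; rw [hortho k k, if_pos rfl]
  have hpsum : ∑ k, p k = 1 := by
    have htr' : (∑ k, (p k : ℂ)) = 1 := by
      rw [hdecomp, Matrix.trace_sum] at htr
      rw [← htr]
      apply Finset.sum_congr rfl
      intro k _
      rw [Matrix.trace_smul, smul_eq_mul]
      have : (Matrix.vecMulVec (v k) (star (v k))).trace = 1 := by
        rw [← hvv k]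
        simp only [Matrix.trace, Matrix.diag, Matrix.vecMulVec_apply, dotProduct,
          Pi.star_apply]
        apply Finset.sum_congr rfl
        intro i _
        ring
      rw [this, mul_one]
    have := htr'
    push_cast at this
    exact_mod_cast this
  -- completeness relation
  have hcomp : ∀ i j, (∑ l, v l i * star (v l j)) = if i = j then (1:ℂ) else 0 := by
    set V : Matrix (Fin N → Fin d) (Fin N → Fin d) ℂ := fun i k => v k i with hV
    have h1 : Vᴴ * V = 1 := by
      ext k l
      rw [Matrix.mul_apply, Matrix.one_apply, ← hortho k l]
      apply Finset.sum_congr rfl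
      intro i _
      rw [Matrix.conjTranspose_apply]; simp [hV]
    have h2 : V * Vᴴ = 1 := mul_eq_one_comm.mp h1
    intro i j
    have h3 := congrFun (congrFun h2 i) j
    rw [Matrix.mul_apply, Matrix.one_apply] at h3
    rw [← h3]
    apply Finset.sum_congr rfl
    intro l _
    rw [Matrix.conjTranspose_apply]
  -- Parseval: row sums of squared matrix elements
  have hpars : ∀ (G : Matrix (Fin N → Fin d) (Fin N → Fin d) ℂ) (k : Fin N → Fin d),
      ∑ l, ‖star (v k) ⬝ᵥ G *ᵥ v l‖ ^ 2
        = (star (v k) ⬝ᵥ (G * Gᴴ) *ᵥ v k).re := by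
    intro G k
    set u : (Fin N → Fin d) → ℂ := star (v k) ᵥ* G with hu
    have hz : ∀ l, star (v k) ⬝ᵥ G *ᵥ v l = u ⬝ᵥ v l := by
      intro l; rw [Matrix.dotProduct_mulVec]
    have hexp : ∀ l, (u ⬝ᵥ v l) * star (u ⬝ᵥ v l)
        = ∑ i, ∑ j, (u i * star (u j)) * (v l i * star (v l j)) := by
      intro l
      rw [dotProduct, star_sum, Finset.sum_mul_sum]
      apply Finset.sum_congr rfl; intro i _
      apply Finset.sum_congr rfl; intro j _
      rw [star_mul']
      ring
    have hmain : ∑ l, ((u ⬝ᵥ v l) * star (u ⬝ᵥ v l)) = u ⬝ᵥ star u := by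
      calc ∑ l, ((u ⬝ᵥ v l) * star (u ⬝ᵥ v l))
          = ∑ l, ∑ i, ∑ j, (u i * star (u j)) * (v l i * star (v l j)) :=
            Finset.sum_congr rfl fun l _ => hexp l
        _ = ∑ i, ∑ l, ∑ j, (u i * star (u j)) * (v l i * star (v l j)) := Finset.sum_comm
        _ = ∑ i, ∑ j, ∑ l, (u i * star (u j)) * (v l i * star (v l j)) :=
            Finset.sum_congr rfl fun i _ => Finset.sum_comm
        _ = ∑ i, ∑ j, (u i * star (u j)) * ∑ l, (v l i * star (v l j)) := by
            apply Finset.sum_congr rfl; intro i _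
            apply Finset.sum_congr rfl; intro j _
            rw [Finset.mul_sum]
        _ = ∑ i, (u i * star (u i)) := by
            apply Finset.sum_congr rfl; intro i _
            simp only [hcomp, mul_ite, mul_one, mul_zero]
            rw [Finset.sum_ite_eq]
            simp
        _ = u ⬝ᵥ star u := rfl
    have hre : ∀ l, ‖u ⬝ᵥ v l‖ ^ 2 = ((u ⬝ᵥ v l) * star (u ⬝ᵥ v l)).re := by
      intro l
      rw [Complex.sq_norm, Complex.star_def, Complex.mul_conj]
      simp
    have hfin : u ⬝ᵥ star u = star (v k) ⬝ᵥ (G * Gᴴ) *ᵥ v k := by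
      rw [hu, Matrix.star_vecMul, star_star, Matrix.dotProduct_mulVec (star (v k)) (G * Gᴴ),
        ← Matrix.vecMul_vecMul, Matrix.dotProduct_mulVec]
    calc ∑ l, ‖star (v k) ⬝ᵥ G *ᵥ v l‖ ^ 2
        = ∑ l, ((u ⬝ᵥ v l) * star (u ⬝ᵥ v l)).re := by
          apply Finset.sum_congr rfl; intro l _; rw [hz l, hre l]
      _ = (∑ l, (u ⬝ᵥ v l) * star (u ⬝ᵥ v l)).re := (Complex.re_sum _ _).symm
      _ = (star (v k) ⬝ᵥ (G * Gᴴ) *ᵥ v k).re := by rw [hmain, hfin]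
  -- bound each qfi term
  have hterm : ∀ α : Fin 3, qfi p v (collOp d N (spin d α)) ≤
      4 * ∑ k, p k *
        (star (v k) ⬝ᵥ ((collOp d N (spin d α)) * (collOp d N (spin d α))ᴴ) *ᵥ v k).re := by
    intro α
    set G := collOp d N (spin d α) with hGdef
    have hGG : Gᴴ = G := hGh α
    have hconj : ∀ k l, ‖star (v l) ⬝ᵥ G *ᵥ v k‖
        = ‖star (v k) ⬝ᵥ G *ᵥ v l‖ := by
      intro k l
      have heq : star (v l) ⬝ᵥ G *ᵥ v k = star (star (v k) ⬝ᵥ G *ᵥ v l) := by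
        rw [star_dotProduct (v k) (G *ᵥ v l), star_star, Matrix.star_mulVec,
          ← Matrix.dotProduct_mulVec, hGG]
      rw [heq, Complex.star_def, Complex.norm_conj]
    rw [qfi]
    have step1 : ∑ k, ∑ l, (if 0 < p k + p l then
          ((p k - p l)^2/(p k + p l)) * ‖star (v k) ⬝ᵥ G *ᵥ v l‖^2 else 0)
        ≤ ∑ k, ∑ l, (p k + p l) * ‖star (v k) ⬝ᵥ G *ᵥ v l‖^2 := by
      apply Finset.sum_le_sum; intro k _; apply Finset.sum_le_sum; intro l _
      split_ifs with h
      · apply mul_le_mul_of_nonneg_right _ (by positivity)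
        rw [div_le_iff₀ h]
        nlinarith [hp k, hp l]
      · exact mul_nonneg (by linarith [hp k, hp l]) (by positivity)
    have step2 : ∑ k, ∑ l, (p k + p l) * ‖star (v k) ⬝ᵥ G *ᵥ v l‖^2
        = 2 * ∑ k, p k * ∑ l, ‖star (v k) ⬝ᵥ G *ᵥ v l‖^2 := by
      have hsplit : ∀ k l, (p k + p l) * ‖star (v k) ⬝ᵥ G *ᵥ v l‖^2
          = p k * ‖star (v k) ⬝ᵥ G *ᵥ v l‖^2
            + p l * ‖star (v k) ⬝ᵥ G *ᵥ v l‖^2 := fun k l => by ring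
      simp_rw [hsplit]
      simp only [Finset.sum_add_distrib]
      have hswap : ∑ k, ∑ l, p l * ‖star (v k) ⬝ᵥ G *ᵥ v l‖^2
          = ∑ k, ∑ l, p k * ‖star (v k) ⬝ᵥ G *ᵥ v l‖^2 := by
        rw [Finset.sum_comm]
        apply Finset.sum_congr rfl; intro k _
        apply Finset.sum_congr rfl; intro l _
        rw [hconj k l]
      have hS : ∑ k, ∑ l, p k * ‖star (v k) ⬝ᵥ G *ᵥ v l‖^2
          = ∑ k, p k * ∑ l, ‖star (v k) ⬝ᵥ G *ᵥ v l‖^2 :=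
        Finset.sum_congr rfl fun k _ => (Finset.mul_sum _ _ _).symm
      rw [hswap, hS]
      ring
    calc 2 * ∑ k, ∑ l, (if 0 < p k + p l then
          ((p k - p l)^2/(p k + p l)) * ‖star (v k) ⬝ᵥ G *ᵥ v l‖^2 else 0)
        ≤ 2 * ∑ k, ∑ l, (p k + p l) * ‖star (v k) ⬝ᵥ G *ᵥ v l‖^2 := by
          linarith [step1]
      _ = 2 * (2 * ∑ k, p k * ∑ l, ‖star (v k) ⬝ᵥ G *ᵥ v l‖^2) := by rw [step2]
      _ = 4 * ∑ k, p k * ∑ l, ‖star (v k) ⬝ᵥ G *ᵥ v l‖^2 := by ring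
      _ = 4 * ∑ k, p k * (star (v k) ⬝ᵥ (G * Gᴴ) *ᵥ v k).re := by
          rw [show (∑ k, p k * ∑ l, ‖star (v k) ⬝ᵥ G *ᵥ v l‖^2)
              = ∑ k, p k * (star (v k) ⬝ᵥ (G * Gᴴ) *ᵥ v k).re from
            Finset.sum_congr rfl fun k _ => by rw [hpars G k]]
  -- sum over the three directions
  have hbig : ∀ k, ∑ α : Fin 3,
      (star (v k) ⬝ᵥ ((collOp d N (spin d α)) * (collOp d N (spin d α))ᴴ) *ᵥ v k).re
      = (star (v k) ⬝ᵥ bigA d N *ᵥ v k).re := by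
    intro k
    have hsum : ∑ α : Fin 3, (collOp d N (spin d α)) * (collOp d N (spin d α))ᴴ = bigA d N := by
      rw [Fin.sum_univ_three]
      have e0 : spin d 0 = Sx d := rfl
      have e1 : spin d 1 = Sy d := rfl
      have e2 : spin d 2 = Sz d := rfl
      rw [e0, e1, e2, Jx_herm, Jy_herm, Jz_herm, bigA, pow_two, pow_two, pow_two]
    rw [← hsum, Fin.sum_univ_three, Fin.sum_univ_three, Matrix.add_mulVec, Matrix.add_mulVec,
      dotProduct_add, dotProduct_add]
    simp [Complex.add_re]
  have hmono : ∀ k, (star (v k) ⬝ᵥ bigA d N *ᵥ v k).re ≤ C := by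
    intro k
    have h := bigA_rayleigh d N (v k)
    rw [hvv k] at h
    simpa [hC] using h
  calc ∑ α : Fin 3, qfi p v (collOp d N (spin d α))
      ≤ ∑ α : Fin 3, 4 * ∑ k, p k *
          (star (v k) ⬝ᵥ ((collOp d N (spin d α)) * (collOp d N (spin d α))ᴴ) *ᵥ v k).re :=
        Finset.sum_le_sum fun α _ => hterm α
    _ = 4 * ∑ k, p k * (star (v k) ⬝ᵥ bigA d N *ᵥ v k).re := by
        rw [← Finset.mul_sum, Finset.sum_comm]
        congr 1
        apply Finset.sum_congr rfl; intro k _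
        rw [← hbig k, Finset.mul_sum]
    _ ≤ 4 * ∑ k, p k * C := by
        have : ∑ k, p k * (star (v k) ⬝ᵥ bigA d N *ᵥ v k).re ≤ ∑ k, p k * C :=
          Finset.sum_le_sum fun k _ => mul_le_mul_of_nonneg_left (hmono k) (hp k)
        linarith
    _ = 4 * C := by rw [← Finset.sum_mul, hpsum, one_mul]
    _ = 4 * (N : ℝ) * sval d * ((N : ℝ) * sval d + 1) := by rw [hC]; ring
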